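/- For every nonempty subset A ⊆ N one has u^A = Σ_{B : B ⊆ N, A ∩ B ≠ ∅} v_B, where the sum ranges over all subsets B of N meeting A. -/
import Mathlib

open Finset

lemma sum_powerset_neg_one_pow_card_real {α : Type*} [DecidableEq α] (x : Finset α) :
    (∑ m ∈ x.powerset, (-1 : ℝ) ^ m.card) = if x = ∅ then 1 else 0 := by
  have h := Finset.sum_powerset_neg_one_pow_card (α := α) (x := x)
  have h2 : ((∑ m ∈ x.powerset, (-1:ℤ) ^ m.card : ℤ) : ℝ) = ∑ m ∈ x.powerset, (-1:ℝ) ^ m.card := by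
    push_cast; rfl
  rw [← h2, h]
  split <;> simp

/-- Lemma 4.1(a): with `v_A = Σ_{N∖A ⊆ B ⊆ N, B ≠ ∅} (−1)^{|A|+|B|+n+1} u^B`, one has
`u^A = Σ_{B ⊆ N, A ∩ B ≠ ∅} v_B` for every nonempty `A ⊆ N`. -/
theorem u_eq_sum_v (n : ℕ) (hn : 1 ≤ n)
    (u v : Finset (Fin n) → ℝ) (hu0 : u ∅ = 0)
    (hv : ∀ A : Finset (Fin n), A.Nonempty →
      v A = ∑ B ∈ Finset.univ.powerset.filter
          (fun B => Finset.univ \ A ⊆ B ∧ B ≠ ∅),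
        (-1 : ℝ) ^ (A.card + B.card + n + 1) * u B)
    (A : Finset (Fin n)) (hA : A.Nonempty) :
    u A = ∑ B ∈ Finset.univ.powerset.filter (fun B => (A ∩ B).Nonempty), v B := by
  classical
  have hcard : ∀ C : Finset (Fin n), C.card ≤ n := fun C => by
    simpa using card_le_card (subset_univ C)
  -- rewrite v via hv
  rw [Finset.sum_congr rfl (fun B hB => by
    have hBne : (A ∩ B).Nonempty := (mem_filter.mp hB).2
    obtain ⟨x, hx⟩ := hBne
    exact hv B ⟨x, (mem_inter.mp hx).2⟩)]
  rw [Finset.sum_filter]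
  simp only [Finset.sum_filter]
  have hpush : ∀ B ∈ (Finset.univ : Finset (Fin n)).powerset,
      (if (A ∩ B).Nonempty then
        (∑ C ∈ (Finset.univ : Finset (Fin n)).powerset,
          if Finset.univ \ B ⊆ C ∧ C ≠ ∅ then (-1:ℝ) ^ (B.card + C.card + n + 1) * u C else 0)
      else 0)
      = ∑ C ∈ (Finset.univ : Finset (Fin n)).powerset,
          if (A ∩ B).Nonempty then
            (if Finset.univ \ B ⊆ C ∧ C ≠ ∅ then (-1:ℝ) ^ (B.card + C.card + n + 1) * u C else 0)
          else 0 := by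
    intro B _
    split <;> simp
  rw [Finset.sum_congr rfl hpush, Finset.sum_comm]
  -- now compute the inner sum for each C
  have key : ∀ C ∈ (Finset.univ : Finset (Fin n)).powerset,
      (∑ B ∈ (Finset.univ : Finset (Fin n)).powerset,
        if (A ∩ B).Nonempty then
          (if Finset.univ \ B ⊆ C ∧ C ≠ ∅ then (-1:ℝ) ^ (B.card + C.card + n + 1) * u C else 0)
        else 0)
      = if C = A then u A else 0 := by
    intro C _
    by_cases hC : C = ∅
    · subst hC
      have : ∀ B ∈ (Finset.univ : Finset (Fin n)).powerset,
          (if (A ∩ B).Nonempty then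
            (if Finset.univ \ B ⊆ (∅ : Finset (Fin n)) ∧ (∅ : Finset (Fin n)) ≠ ∅ then
              (-1:ℝ) ^ (B.card + (∅ : Finset (Fin n)).card + n + 1) * u ∅ else 0)
          else 0) = 0 := by
        intro B _
        simp
      rw [Finset.sum_congr rfl this]
      have hAne : (∅ : Finset (Fin n)) ≠ A := fun h => hA.ne_empty h.symm
      simp [hAne]
    · -- C nonempty
      simp only [ne_eq, hC, not_false_eq_true, and_true]
      simp only [← ite_and]
      rw [← Finset.sum_filter]
      -- reindex: B ↦ B ∩ C, with inverse D ↦ D ∪ (univ \ C)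
      have hb : ∀ B : Finset (Fin n), Finset.univ \ B ⊆ C ↔ Finset.univ \ C ⊆ B := by
        intro B
        constructor <;>
          · intro h x hx
            rw [mem_sdiff] at hx
            by_contra hxB
            exact hx.2 (h (mem_sdiff.mpr ⟨mem_univ x, hxB⟩))
      have hreindex :
          (∑ B ∈ (Finset.univ : Finset (Fin n)).powerset.filter
              (fun B => (A ∩ B).Nonempty ∧ Finset.univ \ B ⊆ C),
            (-1:ℝ) ^ (B.card + C.card + n + 1) * u C)
          = ∑ D ∈ C.powerset.filter (fun D => (A ∩ (D ∪ (Finset.univ \ C))).Nonempty),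
            -((-1:ℝ) ^ D.card) * u C := by
        apply Finset.sum_nbij' (fun B => B ∩ C) (fun D => D ∪ (Finset.univ \ C))
        · intro B hB
          rw [mem_filter, mem_powerset] at hB ⊢
          obtain ⟨-, hAB, hsub⟩ := hB
          rw [hb] at hsub
          have hBeq : B ∩ C ∪ Finset.univ \ C = B := by
            apply Finset.Subset.antisymm
            · exact union_subset inter_subset_left hsub
            · intro x hx
              by_cases hxC : x ∈ C
              · exact mem_union_left _ (mem_inter.mpr ⟨hx, hxC⟩)
              · exact mem_union_right _ (mem_sdiff.mpr ⟨mem_univ x, hxC⟩)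
          exact ⟨inter_subset_right, by rw [hBeq]; exact hAB⟩
        · intro D hD
          rw [mem_filter, mem_powerset] at hD ⊢
          refine ⟨subset_univ _, hD.2, ?_⟩
          rw [hb]
          exact subset_union_right
        · intro B hB
          rw [mem_filter, mem_powerset] at hB
          obtain ⟨-, -, hsub⟩ := hB
          rw [hb] at hsub
          apply Finset.Subset.antisymm
          · exact union_subset inter_subset_left hsub
          · intro x hx
            by_cases hxC : x ∈ C
            · exact mem_union_left _ (mem_inter.mpr ⟨hx, hxC⟩)
            · exact mem_union_right _ (mem_sdiff.mpr ⟨mem_univ x, hxC⟩)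
        · intro D hD
          rw [mem_filter, mem_powerset] at hD
          rw [union_inter_distrib_right, sdiff_inter_self, union_empty,
            inter_eq_left.mpr hD.1]
        · intro B hB
          rw [mem_filter, mem_powerset] at hB
          obtain ⟨-, -, hsub⟩ := hB
          rw [hb] at hsub
          have hBdiff : B \ C = Finset.univ \ C := by
            apply Finset.Subset.antisymm
            · exact sdiff_subset_sdiff (subset_univ B) (Finset.Subset.refl C)
            · intro x hx
              exact mem_sdiff.mpr ⟨hsub hx, (mem_sdiff.mp hx).2⟩
          have hBcard : B.card = (B ∩ C).card + (n - C.card) := by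
            rw [← card_inter_add_card_sdiff B C, hBdiff, card_sdiff_of_subset (subset_univ C),
              card_univ, Fintype.card_fin]
          have hexp : B.card + C.card + n + 1 = (B ∩ C).card + 2 * n + 1 := by
            rw [hBcard]
            have := hcard C
            omega
          rw [hexp, pow_add, pow_add, pow_mul, neg_one_sq, one_pow, pow_one, mul_one]
          ring
      rw [hreindex]
      -- now compute the alternating sum over D ⊆ C
      have hCne : C.Nonempty := nonempty_iff_ne_empty.mpr hC
      by_cases hAC : A ⊆ C
      · -- condition reduces to (A ∩ D).Nonempty
        have hAdiff : A ∩ (Finset.univ \ C) = ∅ := by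
          rw [← Finset.disjoint_iff_inter_eq_empty]
          exact disjoint_sdiff.mono_left hAC
        have hcond : ∀ D ∈ C.powerset,
            ((A ∩ (D ∪ (Finset.univ \ C))).Nonempty ↔ (A ∩ D).Nonempty) := by
          intro D _
          rw [inter_union_distrib_left, hAdiff, union_empty]
        rw [Finset.filter_congr hcond]
        have hsplit := Finset.sum_filter_add_sum_filter_not C.powerset
          (fun D => (A ∩ D).Nonempty) (fun D => -((-1:ℝ) ^ D.card) * u C)
        have hnotfilter : C.powerset.filter (fun D => ¬(A ∩ D).Nonempty)
            = (C \ A).powerset := by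
          ext D
          simp only [mem_filter, mem_powerset, not_nonempty_iff_eq_empty,
            ← Finset.disjoint_iff_inter_eq_empty, subset_sdiff]
          exact ⟨fun h => ⟨h.1, h.2.symm⟩, fun h => ⟨h.1, h.2.symm⟩⟩
        have htotal : (∑ D ∈ C.powerset, -((-1:ℝ) ^ D.card) * u C) = 0 := by
          rw [← Finset.sum_mul, Finset.sum_neg_distrib,
            sum_powerset_neg_one_pow_card_real]
          simp [hC]
        have hrest : (∑ D ∈ (C \ A).powerset, -((-1:ℝ) ^ D.card) * u C)
            = -(if C = A then u A else 0) := by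
          rw [← Finset.sum_mul, Finset.sum_neg_distrib,
            sum_powerset_neg_one_pow_card_real]
          have : C \ A = ∅ ↔ C = A := by
            rw [Finset.sdiff_eq_empty_iff_subset]
            exact ⟨fun h => Finset.Subset.antisymm h hAC, fun h => h ▸ Subset.refl _⟩
          by_cases hCA : C = A
          · simp [this.mpr hCA, hCA]
          · simp [(not_iff_not.mpr this).mpr hCA, hCA]
        rw [hnotfilter, hrest] at hsplit
        linarith [hsplit, htotal]
      · -- condition is always true
        have hcond : ∀ D ∈ C.powerset, (A ∩ (D ∪ (Finset.univ \ C))).Nonempty := by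
          intro D _
          obtain ⟨a, haA, haC⟩ := Finset.not_subset.mp hAC
          exact ⟨a, mem_inter.mpr ⟨haA, mem_union_right _ (mem_sdiff.mpr ⟨mem_univ a, haC⟩)⟩⟩
        rw [Finset.filter_true_of_mem hcond]
        have hCA : C ≠ A := fun h => hAC (h ▸ Subset.refl A)
        rw [← Finset.sum_mul, Finset.sum_neg_distrib,
          sum_powerset_neg_one_pow_card_real]
        simp [hC, hCA]
  rw [Finset.sum_congr rfl key, Finset.sum_ite_eq' _ A]
  simp
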